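/- Let (X,d,μ) be a space of homogeneous type, p(·): X → [1,∞] with 1/p(·) ∈ LH, and D a dyadic grid on X. Then there exists a constant C such that for every dyadic cube Q ∈ D: μ(Q)^{1/p₊(Q) − 1/p₋(Q)} ≤ C, and for all x ∈ Q, μ(Q)^{1/p(x) − 1/p₋(Q)} ≤ C and μ(Q)^{1/p₊(Q) − 1/p(x)} ≤ C. -/

import Mathlib

open MeasureTheory ENNReal Filter

/-- Quasi-metric ball. -/
def qball {X : Type*} (d : X → X → ℝ) (x : X) (r : ℝ) : Set X := {y | d x y < r}

/-- `(X,d)` is a quasi-metric space with quasi-metric constant `A₀`. -/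
def IsQuasiMetric {X : Type*} (d : X → X → ℝ) (A₀ : ℝ) : Prop :=
  1 ≤ A₀ ∧ (∀ x y, 0 ≤ d x y) ∧ (∀ x y, d x y = 0 ↔ x = y) ∧ (∀ x y, d x y = d y x) ∧
    ∀ x y z, d x y ≤ A₀ * (d x z + d y z)

/-- `μ` is doubling with doubling constant `Cμ` for quasi-metric balls. -/
def IsDoubling {X : Type*} [MeasurableSpace X] (d : X → X → ℝ) (μ : MeasureTheory.Measure X)
    (Cμ : ℝ) : Prop :=
  1 ≤ Cμ ∧ ∀ x r, 0 < r → μ (qball d x (2 * r)) ≤ ENNReal.ofReal Cμ * μ (qball d x r)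

/-- All quasi-metric balls have positive finite measure. -/
def BallsFinite {X : Type*} [MeasurableSpace X] (d : X → X → ℝ)
    (μ : MeasureTheory.Measure X) : Prop :=
  ∀ x r, 0 < r → 0 < μ (qball d x r) ∧ μ (qball d x r) < ⊤

/-- Reverse doubling: `μ(B(x,r/2)) ≤ γ μ(B(x,r))` whenever `B(x,r) ⊊ X`. -/
def IsReverseDoubling {X : Type*} [MeasurableSpace X] (d : X → X → ℝ)
    (μ : MeasureTheory.Measure X) (γ : ℝ) : Prop :=
  0 < γ ∧ γ < 1 ∧ ∀ x r, 0 < r → qball d x r ≠ Set.univ →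
    μ (qball d x (r / 2)) ≤ ENNReal.ofReal γ * μ (qball d x r)

/-- The fractional maximal operator `M_η`. -/
noncomputable def fracMax {X : Type*} [MeasurableSpace X] (d : X → X → ℝ)
    (μ : MeasureTheory.Measure X) (η : ℝ) (f : X → ℝ) (x : X) : ℝ≥0∞ :=
  ⨆ (z : X) (r : ℝ) (_ : 0 < r) (_ : x ∈ qball d z r),
    μ (qball d z r) ^ η * ((μ (qball d z r))⁻¹ * ∫⁻ y in qball d z r, ENNReal.ofReal |f y| ∂μ)

/-- A dyadic grid on a space of homogeneous type (Hytönen–Kairema). -/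
def IsDyadicGrid {X : Type*} [MeasurableSpace X] (d : X → X → ℝ)
    (μ : MeasureTheory.Measure X) (𝒟 : ℤ → Set (Set X)) : Prop :=
  ∃ (C δ ε : ℝ) (xc : Set X → X), 0 < C ∧ 0 < δ ∧ δ < 1 ∧ 0 < ε ∧ ε < 1 ∧
    (∀ k, (𝒟 k).PairwiseDisjoint id ∧ ⋃₀ 𝒟 k = Set.univ) ∧
    (∀ k l, ∀ Q₁ ∈ 𝒟 k, ∀ Q₂ ∈ 𝒟 l, Q₁ ∩ Q₂ = ∅ ∨ Q₁ ⊆ Q₂ ∨ Q₂ ⊆ Q₁) ∧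
    (∀ k, ∀ Q₁ ∈ 𝒟 k, ∃ Q₂ ∈ 𝒟 (k + 1), Q₂ ⊆ Q₁) ∧
    (∀ k, ∀ Q₁ ∈ 𝒟 k, ∃! Q₃, Q₃ ∈ 𝒟 (k - 1) ∧ Q₁ ⊆ Q₃) ∧
    (∀ k, ∀ Q₁ ∈ 𝒟 k, ∀ Q₂ ∈ 𝒟 (k + 1), Q₂ ⊆ Q₁ → ENNReal.ofReal ε * μ Q₁ ≤ μ Q₂) ∧
    (∀ k, ∀ Q ∈ 𝒟 k, MeasurableSet Q ∧
      qball d (xc Q) (δ ^ k) ⊆ Q ∧ Q ⊆ qball d (xc Q) (C * δ ^ k))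

/-- The dyadic fractional maximal operator `M^𝒟_η`. -/
noncomputable def dyadicFracMax {X : Type*} [MeasurableSpace X]
    (μ : MeasureTheory.Measure X) (𝒟 : ℤ → Set (Set X)) (η : ℝ) (f : X → ℝ) (x : X) : ℝ≥0∞ :=
  ⨆ (k : ℤ) (Q ∈ 𝒟 k) (_ : x ∈ Q),
    μ Q ^ η * ((μ Q)⁻¹ * ∫⁻ y in Q, ENNReal.ofReal |f y| ∂μ)

/-- Local log-Hölder continuity with constant `C₀`. -/
def LH0 {X : Type*} (d : X → X → ℝ) (r : X → ℝ) (C₀ : ℝ) : Prop :=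
  ∀ x y, d x y < 1 / 2 → |r x - r y| ≤ -C₀ / Real.log (d x y)

/-- Log-Hölder continuity at infinity with base point `x₀`, constant `Cinf`, limit `rinf`. -/
def LHinf {X : Type*} (d : X → X → ℝ) (r : X → ℝ) (x₀ : X) (Cinf rinf : ℝ) : Prop :=
  ∀ x, |r x - rinf| ≤ Cinf / Real.log (Real.exp 1 + d x x₀)

/-- The modular of the variable Lebesgue space `L^{p(·)}`. -/
noncomputable def vModular {X : Type*} [MeasurableSpace X] (μ : MeasureTheory.Measure X)
    (p : X → ℝ≥0∞) (g : X → ℝ≥0∞) (lam : ℝ≥0∞) : ℝ≥0∞ :=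
  (∫⁻ x in {x | p x ≠ ⊤}, (g x / lam) ^ (p x).toReal ∂μ)
    + lam⁻¹ * essSup g (μ.restrict {x | p x = ⊤})

/-- The Luxemburg norm of the variable Lebesgue space `L^{p(·)}`. -/
noncomputable def vNorm {X : Type*} [MeasurableSpace X] (μ : MeasureTheory.Measure X)
    (p : X → ℝ≥0∞) (g : X → ℝ≥0∞) : ℝ≥0∞ :=
  sInf {lam : ℝ≥0∞ | 0 < lam ∧ vModular μ p g lam ≤ 1}

/-- The fractional integral operator (Riesz potential) `I_η`, applied to `|f|`. -/
noncomputable def fracInt {X : Type*} [MeasurableSpace X] (d : X → X → ℝ)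
    (μ : MeasureTheory.Measure X) (η : ℝ) (f : X → ℝ) (x : X) : ℝ≥0∞ :=
  ∫⁻ y, ENNReal.ofReal |f y| / μ (qball d x (d x y)) ^ (1 - η) ∂μ


section Aux

lemma qball_mono {X : Type*} (d : X → X → ℝ) (x : X) {r R : ℝ} (h : r ≤ R) :
    qball d x r ⊆ qball d x R := fun _ hz => lt_of_lt_of_le hz h

lemma natCeil_le_max_add_one (x : ℝ) : (⌈x⌉₊ : ℝ) ≤ max 0 x + 1 := by
  rcases le_or_gt x 0 with h | h
  · simp only [Nat.ceil_eq_zero.2 h, Nat.cast_zero]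
    positivity
  · have h1 : (⌈x⌉₊:ℝ) < x + 1 := Nat.ceil_lt_add_one h.le
    have h2 : x ≤ max 0 x := le_max_right _ _
    linarith

lemma doubling_iter {X : Type*} [MeasurableSpace X] {d : X → X → ℝ}
    {μ : MeasureTheory.Measure X} {Cμ : ℝ}
    (hdb : IsDoubling d μ Cμ) (x : X) {r : ℝ} (hr : 0 < r) (m : ℕ) :
    μ (qball d x (2^m * r)) ≤ ENNReal.ofReal (Cμ^m) * μ (qball d x r) := by
  induction m with
  | zero => simp
  | succ n ih =>
      have h2 : (2:ℝ)^(n+1) * r = 2 * (2^n * r) := by ring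
      have hC0 : (0:ℝ) ≤ Cμ := le_trans zero_le_one hdb.1
      rw [h2]
      calc μ (qball d x (2*(2^n*r))) ≤ ENNReal.ofReal Cμ * μ (qball d x (2^n*r)) :=
            hdb.2 x _ (by positivity)
        _ ≤ ENNReal.ofReal Cμ * (ENNReal.ofReal (Cμ^n) * μ (qball d x r)) := by gcongr
        _ = ENNReal.ofReal (Cμ^(n+1)) * μ (qball d x r) := by
            rw [← mul_assoc, ← ENNReal.ofReal_mul hC0, pow_succ]; ring_nf

lemma log_add_one_le_mul {c D : ℝ} (hc : 1 ≤ c) (hD : 0 ≤ D) :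
    Real.log (D+1) ≤ (Real.log (1 + c) + 1) * Real.log (Real.exp 1 + D / c) := by
  have hc0 : 0 < c := lt_of_lt_of_le one_pos hc
  have he : Real.exp 1 + D / c ≥ Real.exp 1 := by
    have : 0 ≤ D / c := div_nonneg hD hc0.le
    linarith
  have hL1 : 1 ≤ Real.log (Real.exp 1 + D / c) := by
    calc (1:ℝ) = Real.log (Real.exp 1) := (Real.log_exp 1).symm
    _ ≤ _ := Real.log_le_log (Real.exp_pos 1) he
  have hstep : D + 1 ≤ (1 + c) * (Real.exp 1 + D / c) := by
    have h1 : (1:ℝ) ≤ (1+c) * Real.exp 1 := by nlinarith [Real.exp_one_gt_d9.le]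
    have h2 : D ≤ (1+c) * (D/c) := by
      rw [mul_div_assoc', le_div_iff₀ hc0]
      nlinarith
    nlinarith
  have hD1 : (0:ℝ) < D + 1 := by linarith
  calc Real.log (D+1) ≤ Real.log ((1+c) * (Real.exp 1 + D/c)) :=
        Real.log_le_log hD1 hstep
  _ = Real.log (1+c) + Real.log (Real.exp 1 + D/c) := by
      rw [Real.log_mul (by positivity) (by positivity)]
  _ ≤ (Real.log (1+c) + 1) * Real.log (Real.exp 1 + D / c) := by
      have hlc : 0 ≤ Real.log (1+c) := Real.log_nonneg (by linarith)
      nlinarith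

lemma osc_LH0 {X : Type*} {d : X → X → ℝ} {rr : X → ℝ} {C₀ : ℝ}
    (hd0 : ∀ x y, 0 ≤ d x y) (hdeq : ∀ x y, d x y = 0 ↔ x = y)
    (h0 : LH0 d rr C₀) {u v : X} {ρ : ℝ} (hρ0 : 0 < ρ) (hρ : ρ < 1/2)
    (hd : d u v ≤ ρ) : |rr u - rr v| ≤ (max C₀ 0) / (-Real.log ρ) := by
  have hlogρ : 0 < -Real.log ρ := by
    have := Real.log_neg hρ0 (by linarith)
    linarith
  rcases eq_or_lt_of_le (hd0 u v) with h | h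
  · rw [(hdeq u v).1 h.symm]
    simp only [sub_self, abs_zero]
    positivity
  · have h1 : |rr u - rr v| ≤ -C₀ / Real.log (d u v) := h0 u v (by linarith)
    have hlogd : 0 < -Real.log (d u v) := by
      have := Real.log_neg h (by linarith)
      linarith
    have h2 : -C₀ / Real.log (d u v) = C₀ / (-Real.log (d u v)) := by
      rw [div_neg, neg_div]
    have h3 : C₀ / (-Real.log (d u v)) ≤ (max C₀ 0) / (-Real.log (d u v)) :=
      (div_le_div_iff_of_pos_right hlogd).mpr (le_max_left _ _)
    have h4 : (max C₀ 0) / (-Real.log (d u v)) ≤ (max C₀ 0) / (-Real.log ρ) := by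
      apply div_le_div_of_nonneg_left (le_max_right _ _) hlogρ
      have := Real.log_le_log h hd
      linarith
    linarith

lemma osc_LHinf {X : Type*} {d : X → X → ℝ} {rr : X → ℝ} {x₀ : X} {Cinf pinf : ℝ}
    (hd0 : ∀ x y, 0 ≤ d x y) (hinf : LHinf d rr x₀ Cinf pinf) {u v : X} {s : ℝ}
    (hs : 0 ≤ s) (hu : s ≤ d u x₀) (hv : s ≤ d v x₀) :
    |rr u - rr v| ≤ 2 * (max Cinf 0) / Real.log (Real.exp 1 + s) := by
  have hL : 1 ≤ Real.log (Real.exp 1 + s) := by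
    calc (1:ℝ) = Real.log (Real.exp 1) := (Real.log_exp 1).symm
    _ ≤ _ := Real.log_le_log (Real.exp_pos 1) (by linarith)
  have key : ∀ w : X, s ≤ d w x₀ → |rr w - pinf| ≤ (max Cinf 0) / Real.log (Real.exp 1 + s) := by
    intro w hw
    have hLw : 1 ≤ Real.log (Real.exp 1 + d w x₀) := by
      calc (1:ℝ) = Real.log (Real.exp 1) := (Real.log_exp 1).symm
      _ ≤ _ := Real.log_le_log (Real.exp_pos 1) (by linarith [hd0 w x₀])
    calc |rr w - pinf| ≤ Cinf / Real.log (Real.exp 1 + d w x₀) := hinf w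
    _ ≤ (max Cinf 0) / Real.log (Real.exp 1 + d w x₀) :=
        (div_le_div_iff_of_pos_right (by linarith)).mpr (le_max_left _ _)
    _ ≤ (max Cinf 0) / Real.log (Real.exp 1 + s) :=
        div_le_div_of_nonneg_left (le_max_right _ _) (by linarith)
          (Real.log_le_log (by positivity) (by linarith))
  calc |rr u - rr v| ≤ |rr u - pinf| + |rr v - pinf| := by
        calc |rr u - rr v| = |(rr u - pinf) - (rr v - pinf)| := by ring_nf
        _ ≤ _ := abs_sub _ _
  _ ≤ 2 * (max Cinf 0) / Real.log (Real.exp 1 + s) := by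
      have h1 := key u hu
      have h2 := key v hv
      rw [two_mul, add_div]
      linarith

lemma measure_lower {X : Type*} [MeasurableSpace X] {d : X → X → ℝ}
    {μ : MeasureTheory.Measure X}
    {A₀ Cμ : ℝ} (hqm : IsQuasiMetric d A₀) (hdb : IsDoubling d μ Cμ)
    (hb : BallsFinite d μ) (x₀ xc : X) {t : ℝ} (ht : 0 < t) :
    -Real.log ((μ (qball d xc t)).toReal) ≤
      (Real.log Cμ + |Real.log ((μ (qball d x₀ 1)).toReal)|)
      + (Real.log Cμ / Real.log 2) * max 0 (Real.log (A₀ * (d xc x₀ + 1)) - Real.log t) := by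
  obtain ⟨hA₀, hd0, hdeq, hdsymm, hdtri⟩ := hqm
  have hCμ : 1 ≤ Cμ := hdb.1
  set D := d xc x₀ with hDdef
  have hD : 0 ≤ D := hd0 _ _
  set R : ℝ := A₀ * (D + 1) / t with hRdef
  have hR : 0 < R := by positivity
  set m : ℕ := ⌈Real.logb 2 R⌉₊ with hmdef
  have h2m : R ≤ 2 ^ m := by
    calc R = (2:ℝ) ^ Real.logb 2 R := (Real.rpow_logb two_pos (by norm_num) hR).symm
    _ ≤ (2:ℝ) ^ (m:ℝ) := Real.rpow_le_rpow_of_exponent_le one_le_two (Nat.le_ceil _)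
    _ = (2:ℝ) ^ m := by rw [Real.rpow_natCast]
  have hsub : qball d x₀ 1 ⊆ qball d xc (2 ^ m * t) := by
    intro z hz
    have hz1 : d x₀ z < 1 := hz
    have htr : d xc z ≤ A₀ * (d xc x₀ + d z x₀) := hdtri xc z x₀
    have hzx : d z x₀ < 1 := by rw [hdsymm]; exact hz1
    have h5 : d xc z < A₀ * (D + 1) := by
      have : A₀ * (d xc x₀ + d z x₀) < A₀ * (D + 1) := by
        apply mul_lt_mul_of_pos_left _ (by linarith)
        linarith
      linarith
    have h6 : A₀ * (D + 1) ≤ 2 ^ m * t := by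
      rw [hRdef] at h2m
      calc A₀ * (D+1) = (A₀ * (D+1) / t) * t := by field_simp
      _ ≤ 2 ^ m * t := mul_le_mul_of_nonneg_right h2m ht.le
    exact lt_of_lt_of_le h5 h6
  have hchain : μ (qball d x₀ 1) ≤ ENNReal.ofReal (Cμ ^ m) * μ (qball d xc t) :=
    le_trans (MeasureTheory.measure_mono hsub) (doubling_iter hdb xc ht m)
  set M : ℝ := (μ (qball d x₀ 1)).toReal with hMdef
  set q : ℝ := (μ (qball d xc t)).toReal with hqdef
  have hM0 : 0 < M := ENNReal.toReal_pos (hb x₀ 1 one_pos).1.ne' (hb x₀ 1 one_pos).2.ne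
  have hq0 : 0 < q := ENNReal.toReal_pos (hb xc t ht).1.ne' (hb xc t ht).2.ne
  have htop : ENNReal.ofReal (Cμ ^ m) * μ (qball d xc t) ≠ ⊤ :=
    ENNReal.mul_ne_top ENNReal.ofReal_ne_top (hb xc t ht).2.ne
  have hreal : M ≤ Cμ ^ m * q := by
    have := ENNReal.toReal_mono htop hchain
    rwa [ENNReal.toReal_mul, ENNReal.toReal_ofReal (by positivity)] at this
  have hlog : Real.log M ≤ (m : ℝ) * Real.log Cμ + Real.log q := by
    calc Real.log M ≤ Real.log (Cμ ^ m * q) := Real.log_le_log hM0 hreal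
    _ = Real.log (Cμ ^ m) + Real.log q := Real.log_mul (by positivity) hq0.ne'
    _ = (m : ℝ) * Real.log Cμ + Real.log q := by rw [Real.log_pow]
  have hLc : 0 ≤ Real.log Cμ := Real.log_nonneg hCμ
  have hm_le : (m : ℝ) ≤ max 0 (Real.logb 2 R) + 1 := natCeil_le_max_add_one _
  have hmax : max 0 (Real.logb 2 R) = max 0 (Real.log R) / Real.log 2 := by
    have hlog2 : 0 < Real.log 2 := Real.log_pos one_lt_two
    rw [Real.logb]
    rcases le_total (Real.log R) 0 with h | h
    · rw [max_eq_left h, max_eq_left (div_nonpos_iff.mpr (Or.inr ⟨h, hlog2.le⟩)), zero_div]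
    · rw [max_eq_right h, max_eq_right (div_nonneg h hlog2.le)]
  have hlogR : Real.log R = Real.log (A₀ * (D + 1)) - Real.log t := by
    rw [hRdef, Real.log_div (by positivity) ht.ne']
  have key : (m:ℝ) * Real.log Cμ ≤
      Real.log Cμ + Real.log Cμ / Real.log 2 * max 0 (Real.log (A₀ * (D+1)) - Real.log t) := by
    calc (m:ℝ) * Real.log Cμ ≤ (max 0 (Real.logb 2 R) + 1) * Real.log Cμ :=
          mul_le_mul_of_nonneg_right hm_le hLc
    _ = Real.log Cμ + Real.log Cμ / Real.log 2 * max 0 (Real.log R) := by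
        rw [hmax]; field_simp; ring
    _ = _ := by rw [hlogR]
  have habs : -Real.log M ≤ |Real.log M| := neg_le_abs _
  linarith

end Aux

set_option maxHeartbeats 1000000 in
/-- Diening-type estimates on dyadic cubes for a log-Hölder continuous exponent. -/
theorem stmt14 {X : Type*} [MeasurableSpace X] (d : X → X → ℝ) (μ : MeasureTheory.Measure X)
    (A₀ Cμ : ℝ) (hqm : IsQuasiMetric d A₀) (hdb : IsDoubling d μ Cμ) (hb : BallsFinite d μ)
    (p : X → ℝ≥0∞) (hp : ∀ x, 1 ≤ p x)
    (C₀ : ℝ) (hLH0 : LH0 d (fun x => ((p x)⁻¹).toReal) C₀)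
    (x₀ : X) (Cinf pinf : ℝ) (hLHinf : LHinf d (fun x => ((p x)⁻¹).toReal) x₀ Cinf pinf)
    (𝒟 : ℤ → Set (Set X)) (h𝒟 : IsDyadicGrid d μ 𝒟) :
    ∃ C : ℝ, 0 < C ∧ ∀ (k : ℤ), ∀ Q ∈ 𝒟 k,
      (μ Q ^ (((essSup p (μ.restrict Q))⁻¹).toReal
          - ((essInf p (μ.restrict Q))⁻¹).toReal) ≤ ENNReal.ofReal C) ∧
      ∀ y ∈ Q,
        μ Q ^ (((p y)⁻¹).toReal - ((essInf p (μ.restrict Q))⁻¹).toReal) ≤ ENNReal.ofReal C ∧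
        μ Q ^ (((essSup p (μ.restrict Q))⁻¹).toReal - ((p y)⁻¹).toReal) ≤ ENNReal.ofReal C := by
  classical
  obtain ⟨hA₀, hd0, hdeq, hdsymm, hdtri⟩ := id hqm
  have hA₀0 : (0:ℝ) < A₀ := lt_of_lt_of_le one_pos hA₀
  have hCμ : 1 ≤ Cμ := hdb.1
  obtain ⟨C', δ, ε, xc, hC'0, hδ0, hδ1, hε0, hε1, hcov, htri, hchild, hparent, hthick, hball0⟩ :=
    h𝒟
  set C : ℝ := max C' 1 with hCdef
  have hC1 : (1:ℝ) ≤ C := le_max_right _ _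
  have hC0 : (0:ℝ) < C := lt_of_lt_of_le one_pos hC1
  have hball : ∀ k : ℤ, ∀ Q ∈ 𝒟 k, MeasurableSet Q ∧
      qball d (xc Q) (δ ^ k) ⊆ Q ∧ Q ⊆ qball d (xc Q) (C * δ ^ k) := by
    intro k Q hQ
    obtain ⟨h1, h2, h3⟩ := hball0 k Q hQ
    refine ⟨h1, h2, h3.trans (qball_mono _ _ ?_)⟩
    have ht : (0:ℝ) < δ ^ k := zpow_pos hδ0 k
    have hCC : C' ≤ C := le_max_left _ _
    exact mul_le_mul_of_nonneg_right hCC ht.le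
  clear_value C
  set rr : X → ℝ := fun x => ((p x)⁻¹).toReal with hrrdef
  have hpne : ∀ x, p x ≠ 0 := fun x => (lt_of_lt_of_le one_pos (hp x)).ne'
  have hpinvne : ∀ x, (p x)⁻¹ ≠ ⊤ := fun x => ENNReal.inv_ne_top.mpr (hpne x)
  have hr01 : ∀ x, 0 ≤ rr x ∧ rr x ≤ 1 := by
    intro x
    refine ⟨ENNReal.toReal_nonneg, ?_⟩
    have h1 : (p x)⁻¹ ≤ 1 := ENNReal.inv_le_one.mpr (hp x)
    calc rr x ≤ (1:ℝ≥0∞).toReal := ENNReal.toReal_mono (by simp) h1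
    _ = 1 := by simp
  -- global constants
  set Lc : ℝ := Real.log Cμ with hLcdef
  have hLc : 0 ≤ Lc := Real.log_nonneg hCμ
  set M : ℝ := (μ (qball d x₀ 1)).toReal with hMdef
  set κ₂ : ℝ := Lc / Real.log 2 with hκ₂def
  have hκ₂ : 0 ≤ κ₂ := div_nonneg hLc (Real.log_nonneg one_le_two)
  set κ₀ : ℝ := Lc + |Real.log M| with hκ₀def
  have hκ₀ : 0 ≤ κ₀ := by rw [hκ₀def]; exact add_nonneg hLc (abs_nonneg _)
  set C₀' : ℝ := max C₀ 0 with hC₀'def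
  have hC₀' : 0 ≤ C₀' := le_max_right _ _
  set Cinf' : ℝ := max Cinf 0 with hCinf'def
  have hCinf' : 0 ≤ Cinf' := le_max_right _ _
  set cA : ℝ := Real.log (1 + 2*A₀) + 1 with hcAdef
  have hcA : 0 ≤ cA := by
    have h1 : 0 ≤ Real.log (1 + 2*A₀) := Real.log_nonneg (by linarith)
    linarith
  set t₀ : ℝ := 1/(8*A₀*C) with ht₀def
  have ht₀ : 0 < t₀ := by positivity
  have h2AC : (2:ℝ) ≤ 2*A₀*C := by
    have h1 : (1:ℝ)*1 ≤ A₀*C := mul_le_mul hA₀ hC1 zero_le_one (by linarith)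
    nlinarith
  set c₅ : ℝ := 1 + Real.log (2*A₀*C) with hc₅def
  have hlog2AC : 0 ≤ Real.log (2*A₀*C) := Real.log_nonneg (by linarith)
  have hc₅ : 0 ≤ c₅ := by rw [hc₅def]; linarith
  set g₁ : ℝ := Real.log (10*A₀^2*C) with hg₁def
  have hg₁ : 0 ≤ g₁ := Real.log_nonneg (by
    have h1 : (1:ℝ)*1 ≤ A₀*A₀ := mul_le_mul hA₀ hA₀ zero_le_one (by linarith)
    have h2 : (1:ℝ)*1 ≤ (A₀*A₀)*C := mul_le_mul (by linarith) hC1 zero_le_one (by nlinarith)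
    nlinarith [sq_nonneg A₀, pow_two A₀])
  have hlogA₀ : 0 ≤ Real.log A₀ := Real.log_nonneg hA₀
  set S1 : ℝ := C₀'*(κ₀ + κ₂*Real.log A₀) + C₀'*κ₂*c₅ + κ₂*(2*Cinf'*cA + 1) with hS1def
  set S2 : ℝ := κ₀ + κ₂*g₁ with hS2def
  set S3 : ℝ := κ₀ + κ₂*Real.log A₀ + κ₂*|Real.log t₀| + 2*Cinf'*cA*κ₂ with hS3def
  have hS1 : 0 ≤ S1 := by
    rw [hS1def]
    have h1 : 0 ≤ C₀'*(κ₀ + κ₂*Real.log A₀) :=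
      mul_nonneg hC₀' (add_nonneg hκ₀ (mul_nonneg hκ₂ hlogA₀))
    have h2 : 0 ≤ C₀'*κ₂*c₅ := mul_nonneg (mul_nonneg hC₀' hκ₂) hc₅
    have h3 : 0 ≤ κ₂*(2*Cinf'*cA + 1) := by
      apply mul_nonneg hκ₂
      have := mul_nonneg (mul_nonneg (by norm_num : (0:ℝ) ≤ 2) hCinf') hcA
      linarith
    linarith
  have hS2 : 0 ≤ S2 := by
    rw [hS2def]
    have := mul_nonneg hκ₂ hg₁
    linarith
  have hS3 : 0 ≤ S3 := by
    rw [hS3def]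
    have h1 : 0 ≤ κ₂*Real.log A₀ := mul_nonneg hκ₂ hlogA₀
    have h2 : 0 ≤ κ₂*|Real.log t₀| := mul_nonneg hκ₂ (abs_nonneg _)
    have h3 : 0 ≤ 2*Cinf'*cA*κ₂ :=
      mul_nonneg (mul_nonneg (mul_nonneg (by norm_num) hCinf') hcA) hκ₂
    linarith
  set κ : ℝ := S1 + S2 + S3 with hκdef
  have hκ : 0 ≤ κ := by rw [hκdef]; linarith
  clear_value Lc M κ₂ κ₀ C₀' Cinf' cA t₀ c₅ g₁ S1 S2 S3 κ
  refine ⟨Real.exp κ, Real.exp_pos κ, ?_⟩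
  intro k Q hQ
  obtain ⟨hQm, hin, hout⟩ := hball k Q hQ
  set t : ℝ := δ ^ k with htdef
  have ht : 0 < t := zpow_pos hδ0 k
  set D : ℝ := d (xc Q) x₀ with hDdef
  have hD : 0 ≤ D := hd0 _ _
  have hμQ0 : 0 < μ Q := lt_of_lt_of_le (hb _ t ht).1 (MeasureTheory.measure_mono hin)
  have hμQtop : μ Q < ⊤ :=
    lt_of_le_of_lt (MeasureTheory.measure_mono hout) (hb _ _ (by positivity)).2
  set q : ℝ := (μ Q).toReal with hqdef
  have hq0 : 0 < q := ENNReal.toReal_pos hμQ0.ne' hμQtop.ne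
  set Sa : ℝ≥0∞ := essSup p (μ.restrict Q) with hSadef
  set I : ℝ≥0∞ := essInf p (μ.restrict Q) with hIdef
  set a : ℝ := (Sa⁻¹).toReal with hadef
  set b : ℝ := (I⁻¹).toReal with hbdef
  have ha0 : 0 ≤ a := ENNReal.toReal_nonneg
  have hb0 : 0 ≤ b := ENNReal.toReal_nonneg
  have hνzero : μ.restrict Q ≠ 0 := by
    rw [Ne, MeasureTheory.Measure.restrict_eq_zero]
    exact hμQ0.ne'
  haveI : (MeasureTheory.ae (μ.restrict Q)).NeBot := MeasureTheory.ae_neBot.mpr hνzero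
  have hI1 : 1 ≤ I := le_essInf_of_ae_le 1 (Filter.Eventually.of_forall (fun z => hp z))
  have hSa1 : 1 ≤ Sa := by
    have h1 : ∀ᵐ z ∂(μ.restrict Q), p z ≤ Sa := ae_le_essSup p
    obtain ⟨z, hz⟩ := h1.exists
    exact le_trans (hp z) hz
  have hIne : I ≠ 0 := (lt_of_lt_of_le one_pos hI1).ne'
  have hSane : Sa ≠ 0 := (lt_of_lt_of_le one_pos hSa1).ne'
  have hIinvne : I⁻¹ ≠ ⊤ := ENNReal.inv_ne_top.mpr hIne
  have hSainvne : Sa⁻¹ ≠ ⊤ := ENNReal.inv_ne_top.mpr hSane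
  have haeb : ∀ᵐ z ∂(μ.restrict Q), rr z ≤ b := by
    filter_upwards [ae_essInf_le (f := p) (μ := μ.restrict Q)] with z hz
    exact ENNReal.toReal_mono hIinvne (ENNReal.inv_le_inv.mpr hz)
  have haea : ∀ᵐ z ∂(μ.restrict Q), a ≤ rr z := by
    filter_upwards [ae_le_essSup p] with z hz
    exact ENNReal.toReal_mono (hpinvne z) (ENNReal.inv_le_inv.mpr hz)
  clear_value t D q Sa I a b
  -- small balls centered in the cube meet the cube in positive measure
  have hclaimD : ∀ y ∈ Q, ∀ ρ : ℝ, 0 < ρ → 0 < μ (Q ∩ qball d y ρ) := by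
    intro y hy ρ hρ
    have hden : (0:ℝ) < 2*A₀*C*t := mul_pos (mul_pos (mul_pos two_pos hA₀0) hC0) ht
    obtain ⟨j, hj⟩ : ∃ j : ℕ, δ ^ j < ρ / (2*A₀*C*t) :=
      exists_pow_lt_of_lt_one (div_pos hρ hden) hδ1
    have ht' : (0:ℝ) < δ ^ (k + (j:ℤ)) := zpow_pos hδ0 _
    have htt' : (δ:ℝ) ^ (k + (j:ℤ)) = t * δ ^ j := by
      rw [zpow_add₀ hδ0.ne' k (j:ℤ), zpow_natCast, htdef]
    have hsmall : 2*A₀*C*(δ ^ (k + (j:ℤ))) < ρ := by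
      rw [htt']
      have h1 : δ ^ j * (2*A₀*C*t) < ρ := (lt_div_iff₀ hden).mp hj
      have h2 : 2*A₀*C*(t*δ^j) = δ ^ j * (2*A₀*C*t) := by ring
      rw [h2]
      exact h1
    obtain ⟨Q', hQ', hyQ'⟩ : ∃ Q' ∈ 𝒟 (k + (j:ℤ)), y ∈ Q' := by
      have hy2 : y ∈ ⋃₀ 𝒟 (k + (j:ℤ)) := by rw [(hcov _).2]; trivial
      obtain ⟨Q', h1, h2⟩ := hy2
      exact ⟨Q', h1, h2⟩
    obtain ⟨hQm', hin', hout'⟩ := hball _ Q' hQ'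
    rcases htri k (k + (j:ℤ)) Q hQ Q' hQ' with hdisj | hsub | hsub'
    · exfalso
      have hmem : y ∈ Q ∩ Q' := ⟨hy, hyQ'⟩
      rw [hdisj] at hmem
      exact hmem
    · have hQball : Q ⊆ qball d y ρ := by
        intro z hz
        have hz' : z ∈ Q' := hsub hz
        have h1 : d (xc Q') z < C * δ ^ (k + (j:ℤ)) := hout' hz'
        have h2 : d (xc Q') y < C * δ ^ (k + (j:ℤ)) := hout' hyQ'
        show d y z < ρ
        calc d y z ≤ A₀ * (d y (xc Q') + d z (xc Q')) := hdtri y z (xc Q')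
        _ = A₀ * (d (xc Q') y + d (xc Q') z) := by rw [hdsymm y (xc Q'), hdsymm z (xc Q')]
        _ < A₀ * (C * δ^(k+(j:ℤ)) + C * δ^(k+(j:ℤ))) := by
            apply mul_lt_mul_of_pos_left _ (by linarith)
            linarith
        _ = 2*A₀*C*(δ^(k+(j:ℤ))) := by ring
        _ < ρ := hsmall
      have heq : Q ∩ qball d y ρ = Q := Set.inter_eq_self_of_subset_left hQball
      rw [heq]
      exact hμQ0
    · have hsubset : qball d (xc Q') (δ ^ (k + (j:ℤ))) ⊆ Q ∩ qball d y ρ := by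
        intro z hz
        refine ⟨hsub' (hin' hz), ?_⟩
        have h1 : d (xc Q') z < δ ^ (k+(j:ℤ)) := hz
        have h2 : d (xc Q') y < C * δ ^ (k+(j:ℤ)) := hout' hyQ'
        show d y z < ρ
        calc d y z ≤ A₀ * (d y (xc Q') + d z (xc Q')) := hdtri y z (xc Q')
        _ = A₀ * (d (xc Q') y + d (xc Q') z) := by rw [hdsymm y (xc Q'), hdsymm z (xc Q')]
        _ < A₀ * (C * δ^(k+(j:ℤ)) + C * δ^(k+(j:ℤ))) := by
            apply mul_lt_mul_of_pos_left _ (by linarith)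
            have h3 : δ^(k+(j:ℤ)) ≤ C * δ^(k+(j:ℤ)) := le_mul_of_one_le_left ht'.le hC1
            linarith
        _ = 2*A₀*C*(δ^(k+(j:ℤ))) := by ring
        _ < ρ := hsmall
      exact lt_of_lt_of_le (hb (xc Q') _ ht').1 (MeasureTheory.measure_mono hsubset)
  -- local uniform continuity of rr
  have hoscball : ∀ y, ∀ η : ℝ, 0 < η → ∃ ρ : ℝ, 0 < ρ ∧
      ∀ z, d y z < ρ → |rr y - rr z| < η := by
    intro y η hη0
    set ρ : ℝ := min (1/4 : ℝ) (Real.exp (-(C₀' + 1)/η)) with hρdef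
    have hρ0 : 0 < ρ := lt_min (by norm_num) (Real.exp_pos _)
    have hρh : ρ < 1/2 := lt_of_le_of_lt (min_le_left _ _) (by norm_num)
    refine ⟨ρ, hρ0, ?_⟩
    intro z hz
    have h1 := osc_LH0 hd0 hdeq hLH0 hρ0 hρh (le_of_lt hz)
    rw [← hC₀'def] at h1
    have h2 : (C₀'+1)/η ≤ -Real.log ρ := by
      have h3 := Real.log_le_log hρ0 (min_le_right (1/4:ℝ) (Real.exp (-(C₀' + 1)/η)))
      rw [Real.log_exp] at h3
      have h4 : -(C₀'+1)/η = -((C₀'+1)/η) := by ring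
      rw [h4] at h3
      linarith
    have h3 : C₀' / (-Real.log ρ) < η := by
      have hpos : 0 < (C₀'+1)/η := by positivity
      have h4 : C₀' / (-Real.log ρ) ≤ C₀' / ((C₀'+1)/η) :=
        div_le_div_of_nonneg_left hC₀' hpos h2
      have h5 : C₀' / ((C₀'+1)/η) = C₀' * η / (C₀'+1) := by field_simp
      have h6 : C₀' * η / (C₀'+1) < η := by
        rw [div_lt_iff₀ (by linarith)]
        have h7 : η*(C₀'+1) = C₀'*η + η := by ring
        linarith
      linarith
    calc |rr y - rr z| ≤ C₀' / (-Real.log ρ) := h1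
    _ < η := h3
  -- pointwise bounds on rr within the cube
  have hRy : ∀ y ∈ Q, a ≤ rr y ∧ rr y ≤ b := by
    intro y hy
    constructor
    · by_contra hcon
      push_neg at hcon
      obtain ⟨ρ, hρ0, hball2⟩ := hoscball y (a - rr y) (by linarith)
      have hposS := hclaimD y hy ρ hρ0
      have hsub2 : Q ∩ qball d y ρ ⊆ {z | rr z < a} ∩ Q := by
        rintro z ⟨hzQ, hzb⟩
        refine ⟨?_, hzQ⟩
        have h1 := hball2 z hzb
        have h2 := abs_lt.mp h1
        simp only [Set.mem_setOf_eq]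
        linarith [h2.1, h2.2]
      have h0 : (μ.restrict Q) {z | rr z < a} = 0 := by
        have h1 := MeasureTheory.ae_iff.mp haea
        simpa [not_le] using h1
      have hgt : 0 < (μ.restrict Q) {z | rr z < a} := by
        rw [MeasureTheory.Measure.restrict_apply' hQm]
        exact lt_of_lt_of_le hposS (MeasureTheory.measure_mono hsub2)
      rw [h0] at hgt
      exact lt_irrefl _ hgt
    · by_contra hcon
      push_neg at hcon
      obtain ⟨ρ, hρ0, hball2⟩ := hoscball y (rr y - b) (by linarith)
      have hposS := hclaimD y hy ρ hρ0
      have hsub2 : Q ∩ qball d y ρ ⊆ {z | b < rr z} ∩ Q := by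
        rintro z ⟨hzQ, hzb⟩
        refine ⟨?_, hzQ⟩
        have h1 := hball2 z hzb
        have h2 := abs_lt.mp h1
        simp only [Set.mem_setOf_eq]
        linarith [h2.1, h2.2]
      have h0 : (μ.restrict Q) {z | b < rr z} = 0 := by
        have h1 := MeasureTheory.ae_iff.mp haeb
        simpa [not_le] using h1
      have hgt : 0 < (μ.restrict Q) {z | b < rr z} := by
        rw [MeasureTheory.Measure.restrict_apply' hQm]
        exact lt_of_lt_of_le hposS (MeasureTheory.measure_mono hsub2)
      rw [h0] at hgt
      exact lt_irrefl _ hgt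
  have hz0 : xc Q ∈ Q := by
    apply hin
    show d (xc Q) (xc Q) < t
    rw [(hdeq _ _).mpr rfl]
    exact ht
  -- b - a is controlled by any oscillation bound
  have hba : ∀ W : ℝ, (∀ u ∈ Q, ∀ v ∈ Q, |rr u - rr v| ≤ W) → b - a ≤ W := by
    intro W hW
    by_contra hcon
    push_neg at hcon
    set ε : ℝ := (b - a - W)/2 with hεdef
    have hε0 : 0 < ε := by
      rw [hεdef]; linarith
    obtain ⟨u, huQ, hu⟩ : ∃ u, u ∈ Q ∧ rr u < a + ε := by
      set c : ℝ≥0∞ := (ENNReal.ofReal (a + ε))⁻¹ with hcdef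
      have hofa : ENNReal.ofReal a = Sa⁻¹ := by
        rw [hadef]; exact ENNReal.ofReal_toReal hSainvne
      have hcSa : c < Sa := by
        have h1 : Sa⁻¹ < ENNReal.ofReal (a + ε) := by
          rw [← hofa]
          exact (ENNReal.ofReal_lt_ofReal_iff (by linarith)).mpr (by linarith)
        have h2 := ENNReal.inv_lt_inv.mpr h1
        rwa [inv_inv] at h2
      have hposSa : 0 < μ ({x | c < p x} ∩ Q) := by
        by_contra hzero
        push_neg at hzero
        have h0 : μ ({x | c < p x} ∩ Q) = 0 := le_antisymm hzero zero_le
        have hae : ∀ᵐ z ∂(μ.restrict Q), p z ≤ c := by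
          rw [MeasureTheory.ae_iff, MeasureTheory.Measure.restrict_apply' hQm]
          simpa [not_le] using h0
        exact absurd (show Sa ≤ c by rw [hSadef]; exact essSup_le_of_ae_le c hae)
          (not_le.mpr hcSa)
      obtain ⟨u, hu1, hu2⟩ := MeasureTheory.nonempty_of_measure_ne_zero hposSa.ne'
      refine ⟨u, hu2, ?_⟩
      have h1 : (p u)⁻¹ < c⁻¹ := ENNReal.inv_lt_inv.mpr hu1
      rw [hcdef, inv_inv] at h1
      have h2 : rr u < (ENNReal.ofReal (a+ε)).toReal :=
        (ENNReal.toReal_lt_toReal (hpinvne u) ENNReal.ofReal_ne_top).mpr h1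
      rwa [ENNReal.toReal_ofReal (by linarith)] at h2
    obtain ⟨v, hvQ, hv⟩ : ∃ v, v ∈ Q ∧ b - ε < rr v := by
      rcases lt_or_ge b ε with hbe | hbe
      · exact ⟨xc Q, hz0, by linarith [(hr01 (xc Q)).1]⟩
      · set c : ℝ≥0∞ := (ENNReal.ofReal (b - ε))⁻¹ with hcdef
        have hofb : ENNReal.ofReal b = I⁻¹ := by
          rw [hbdef]; exact ENNReal.ofReal_toReal hIinvne
        have hIc : I < c := by
          have h1 : c⁻¹ < I⁻¹ := by
            rw [hcdef, inv_inv, ← hofb]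
            exact (ENNReal.ofReal_lt_ofReal_iff (by linarith)).mpr (by linarith)
          exact ENNReal.inv_lt_inv.mp h1
        have hposI : 0 < μ ({x | p x < c} ∩ Q) := by
          by_contra hzero
          push_neg at hzero
          have h0 : μ ({x | p x < c} ∩ Q) = 0 := le_antisymm hzero zero_le
          have hae : ∀ᵐ z ∂(μ.restrict Q), c ≤ p z := by
            rw [MeasureTheory.ae_iff, MeasureTheory.Measure.restrict_apply' hQm]
            simpa [not_le] using h0
          exact absurd (show c ≤ I by rw [hIdef]; exact le_essInf_of_ae_le c hae)
            (not_le.mpr hIc)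
        obtain ⟨v, hv1, hv2⟩ := MeasureTheory.nonempty_of_measure_ne_zero hposI.ne'
        refine ⟨v, hv2, ?_⟩
        have h1 : c⁻¹ < (p v)⁻¹ := ENNReal.inv_lt_inv.mpr hv1
        rw [hcdef, inv_inv] at h1
        have h2 : (ENNReal.ofReal (b-ε)).toReal < rr v :=
          (ENNReal.toReal_lt_toReal ENNReal.ofReal_ne_top (hpinvne v)).mpr h1
        rwa [ENNReal.toReal_ofReal (by linarith)] at h2
    have h1 : rr v - rr u ≤ W := by
      have h2 := abs_le.mp (hW u huQ v hvQ)
      linarith [h2.1]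
    have hεeq : b - a = W + 2*ε := by rw [hεdef]; ring
    linarith
  -- diameter and distance-to-x₀ bounds
  have hdiam : ∀ u ∈ Q, ∀ v ∈ Q, d u v ≤ 2*A₀*C*t := by
    intro u hu v hv
    have h1 : d (xc Q) u < C * t := hout hu
    have h2 : d (xc Q) v < C * t := hout hv
    calc d u v ≤ A₀ * (d u (xc Q) + d v (xc Q)) := hdtri u v (xc Q)
    _ = A₀ * (d (xc Q) u + d (xc Q) v) := by rw [hdsymm u (xc Q), hdsymm v (xc Q)]
    _ ≤ A₀ * (C*t + C*t) := by
        apply mul_le_mul_of_nonneg_left (by linarith) (by linarith)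
    _ = 2*A₀*C*t := by ring
  set smax : ℝ := max 0 (D/A₀ - C*t) with hsmaxdef
  have hsmax0 : 0 ≤ smax := le_max_left _ _
  have hfar : ∀ w ∈ Q, smax ≤ d w x₀ := by
    intro w hw
    apply max_le (hd0 w x₀)
    have h1 : d (xc Q) w < C * t := hout hw
    have h2 : D ≤ A₀ * (d (xc Q) w + d x₀ w) := by
      rw [hDdef]; exact hdtri (xc Q) x₀ w
    have h3 : d x₀ w = d w x₀ := hdsymm x₀ w
    rw [h3] at h2
    have h4 : D / A₀ ≤ d (xc Q) w + d w x₀ := by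
      rw [div_le_iff₀ hA₀0]
      have h5 : (d (xc Q) w + d w x₀)*A₀ = A₀ * (d (xc Q) w + d w x₀) := by ring
      linarith
    linarith
  set Linf : ℝ := Real.log (Real.exp 1 + smax) with hLinfdef
  have hLinf1 : 1 ≤ Linf := by
    rw [hLinfdef]
    calc (1:ℝ) = Real.log (Real.exp 1) := (Real.log_exp 1).symm
    _ ≤ _ := Real.log_le_log (Real.exp_pos 1) (by linarith)
  have hosc3 : ∀ u ∈ Q, ∀ v ∈ Q, |rr u - rr v| ≤ 2*Cinf'/Linf := by
    intro u hu v hv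
    have h := osc_LHinf hd0 hLHinf hsmax0 (hfar u hu) (hfar v hv)
    rw [← hCinf'def, ← hLinfdef] at h
    exact h
  have hosc1 : ∀ u ∈ Q, ∀ v ∈ Q, |rr u - rr v| ≤ 1 := by
    intro u _ v _
    have h1 := hr01 u; have h2 := hr01 v
    rw [abs_sub_le_iff]
    constructor <;> linarith [h1.1, h1.2, h2.1, h2.2]
  set G : ℝ := max 0 (Real.log (A₀*(D+1)) - Real.log t) with hGdef
  have hG0 : 0 ≤ G := le_max_left _ _
  have hlogq : -Real.log q ≤ κ₀ + κ₂ * G := by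
    have h := measure_lower hqm hdb hb x₀ (xc Q) ht
    rw [← hLcdef, ← hMdef, ← hDdef] at h
    have h2 : (μ (qball d (xc Q) t)).toReal ≤ q := by
      rw [hqdef]; exact ENNReal.toReal_mono hμQtop.ne (MeasureTheory.measure_mono hin)
    have h3 : 0 < (μ (qball d (xc Q) t)).toReal :=
      ENNReal.toReal_pos (hb _ t ht).1.ne' (hb _ t ht).2.ne
    have h4 := Real.log_le_log h3 h2
    have h5 : (Lc + |Real.log M|) + (Lc / Real.log 2) *
        max 0 (Real.log (A₀*(D+1)) - Real.log t) = κ₀ + κ₂ * G := by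
      rw [hκ₀def, hκ₂def, hGdef]
    linarith
  have hΛ0 : 0 ≤ κ₀ + κ₂ * G := add_nonneg hκ₀ (mul_nonneg hκ₂ hG0)
  -- the T3far estimate
  have hT3far : ∀ W' : ℝ, 0 ≤ W' → W' ≤ 2*Cinf'/Linf → 2*A₀*C*t ≤ D →
      W' * Real.log (D+1) ≤ 2*Cinf'*cA := by
    intro W' hW'0 hW'le hfarD
    have h2A : (1:ℝ) ≤ 2*A₀ := by linarith
    have hsD : D/(2*A₀) ≤ smax := by
      have hct : C*t ≤ D/(2*A₀) := by
        rw [le_div_iff₀ (by linarith : (0:ℝ) < 2*A₀)]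
        have h1 : C*t*(2*A₀) = 2*A₀*C*t := by ring
        linarith
      have hDA : D/A₀ = 2*(D/(2*A₀)) := by field_simp
      have h1 : D/(2*A₀) ≤ D/A₀ - C*t := by rw [hDA]; linarith
      exact le_trans h1 (le_max_right _ _)
    set LD : ℝ := Real.log (Real.exp 1 + D/(2*A₀)) with hLDdef
    have hLD1 : 1 ≤ LD := by
      rw [hLDdef]
      calc (1:ℝ) = Real.log (Real.exp 1) := (Real.log_exp 1).symm
      _ ≤ _ := Real.log_le_log (Real.exp_pos 1)
          (by have h9 : 0 ≤ D/(2*A₀) := div_nonneg hD (by linarith); linarith)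
    have hLDle : LD ≤ Linf := by
      rw [hLDdef, hLinfdef]
      exact Real.log_le_log (by positivity) (by linarith)
    have hlogD : Real.log (D+1) ≤ cA * LD := by
      have h1 := log_add_one_le_mul h2A hD
      rw [hcAdef]
      exact h1
    have hW'LD : W' ≤ 2*Cinf'/LD :=
      le_trans hW'le (div_le_div_of_nonneg_left (by positivity) (by linarith) hLDle)
    calc W' * Real.log (D+1) ≤ (2*Cinf'/LD) * (cA * LD) :=
          mul_le_mul hW'LD hlogD (Real.log_nonneg (by linarith)) (by positivity)
    _ = 2*Cinf'*cA := by
        have hLD0 : LD ≠ 0 := by linarith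
        field_simp
  -- choose the oscillation bound W and prove the key numeric inequality
  obtain ⟨W, hW0, hWosc, hWκ⟩ :
      ∃ W : ℝ, 0 ≤ W ∧ (∀ u ∈ Q, ∀ v ∈ Q, |rr u - rr v| ≤ W) ∧ W * (κ₀ + κ₂ * G) ≤ κ := by
    rcases le_or_gt t t₀ with hcase | hcase
    · -- small scale : use LH0
      set ρ : ℝ := 2*A₀*C*t with hρdef
      have hρ0 : 0 < ρ := by positivity
      have hρ14 : ρ ≤ 1/4 := by
        rw [ht₀def] at hcase
        have h8 : (0:ℝ) < 8*A₀*C := by positivity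
        have h1 : t*(8*A₀*C) ≤ 1 := (le_div_iff₀ h8).mp hcase
        have h2 : t*(8*A₀*C) = 4*(2*A₀*C*t) := by ring
        rw [hρdef]; linarith
      have hL2a : 1 ≤ -Real.log ρ := by
        have h1 : Real.log ρ ≤ Real.log (1/4) := Real.log_le_log hρ0 hρ14
        have h2 : Real.log (1/4:ℝ) = -Real.log 4 := by
          rw [one_div, Real.log_inv]
        have h3 : (1:ℝ) ≤ Real.log 4 := by
          rw [show (1:ℝ) = Real.log (Real.exp 1) from (Real.log_exp 1).symm]
          apply Real.log_le_log (Real.exp_pos 1)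
          linarith [Real.exp_one_lt_d9.le]
        linarith
      set L2 : ℝ := -Real.log ρ with hL2def
      have hL2 : 1 ≤ L2 := hL2a
      have hL2pos : 0 < L2 := by linarith
      have hosc2 : ∀ u ∈ Q, ∀ v ∈ Q, |rr u - rr v| ≤ C₀' / L2 := by
        intro u hu v hv
        have h := osc_LH0 hd0 hdeq hLH0 hρ0 (by linarith) (hdiam u hu v hv)
        rw [← hC₀'def, ← hL2def] at h
        exact h
      have hlogt : -Real.log t = L2 + Real.log (2*A₀*C) := by
        rw [hL2def, hρdef, Real.log_mul (by positivity) ht.ne']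
        ring
      have hGeq : G = Real.log A₀ + Real.log (D+1) + (-Real.log t) := by
        rw [hGdef, Real.log_mul hA₀0.ne' (by linarith : D+1 ≠ 0)]
        rw [max_eq_right]
        · ring
        · have h1 : 0 ≤ Real.log (D+1) := Real.log_nonneg (by linarith)
          have h2 : 0 < -Real.log t := by rw [hlogt]; linarith
          linarith
      refine ⟨min (C₀'/L2) (min (2*Cinf'/Linf) 1), ?_, ?_, ?_⟩
      · exact le_min (by positivity) (le_min (by positivity) zero_le_one)
      · intro u hu v hv
        exact le_min (hosc2 u hu v hv) (le_min (hosc3 u hu v hv) (hosc1 u hu v hv))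
      · set W : ℝ := min (C₀'/L2) (min (2*Cinf'/Linf) 1) with hWdef
        have hW0 : 0 ≤ W := le_min (by positivity) (le_min (by positivity) zero_le_one)
        have hW2 : W ≤ C₀'/L2 := min_le_left _ _
        have hW3 : W ≤ 2*Cinf'/Linf := le_trans (min_le_right _ _) (min_le_left _ _)
        have hW1 : W ≤ 1 := le_trans (min_le_right _ _) (min_le_right _ _)
        have hT1 : W * (κ₀ + κ₂*Real.log A₀) ≤ C₀' * (κ₀ + κ₂*Real.log A₀) := by
          apply mul_le_mul_of_nonneg_right _ (by positivity)
          calc W ≤ C₀'/L2 := hW2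
          _ ≤ C₀' := div_le_self hC₀' hL2
        have hT2 : W * (κ₂ * (-Real.log t)) ≤ κ₂ * (C₀' * c₅) := by
          have h1 : -Real.log t ≤ c₅ * L2 := by
            rw [hc₅def]
            calc -Real.log t = L2 + Real.log (2*A₀*C) := hlogt
            _ ≤ L2 + Real.log (2*A₀*C) * L2 := by
                have h2 := mul_le_mul_of_nonneg_left hL2 hlog2AC
                linarith
            _ = (1 + Real.log (2*A₀*C)) * L2 := by ring
          have hnt : 0 ≤ -Real.log t := by rw [hlogt]; linarith
          calc W * (κ₂ * (-Real.log t)) ≤ (C₀'/L2) * (κ₂ * (c₅ * L2)) := by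
                apply mul_le_mul hW2 _ (by positivity) (by positivity)
                exact mul_le_mul_of_nonneg_left h1 hκ₂
          _ = κ₂ * (C₀' * c₅) := by field_simp
        have hT3 : W * (κ₂ * Real.log (D+1)) ≤ κ₂ * (2*Cinf'*cA + 1) := by
          have hlogD0 : 0 ≤ Real.log (D+1) := Real.log_nonneg (by linarith)
          rcases le_or_gt (2*A₀*C*t) D with hfarD | hnearD
          · have h1 := hT3far W hW0 hW3 hfarD
            calc W * (κ₂ * Real.log (D+1)) = κ₂ * (W * Real.log (D+1)) := by ring
            _ ≤ κ₂ * (2*Cinf'*cA) := mul_le_mul_of_nonneg_left h1 hκ₂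
            _ ≤ κ₂ * (2*Cinf'*cA + 1) := mul_le_mul_of_nonneg_left (by linarith) hκ₂
          · have h1 : Real.log (D+1) ≤ 1 := by
              have h2 := Real.log_le_sub_one_of_pos (show (0:ℝ) < D+1 by linarith)
              have h3 : D < 1/4 := by
                calc D < 2*A₀*C*t := hnearD
                _ = ρ := by rw [hρdef]
                _ ≤ 1/4 := hρ14
              linarith
            calc W * (κ₂ * Real.log (D+1)) ≤ 1 * (κ₂ * 1) := by
                  apply mul_le_mul hW1 _ (by positivity) zero_le_one
                  exact mul_le_mul_of_nonneg_left h1 hκ₂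
            _ = κ₂ := by ring
            _ ≤ κ₂ * (2*Cinf'*cA + 1) := by
                have h4 : 0 ≤ 2*Cinf'*cA := mul_nonneg (mul_nonneg (by norm_num) hCinf') hcA
                have h5 := mul_le_mul_of_nonneg_left
                  (show (1:ℝ) ≤ 2*Cinf'*cA + 1 by linarith) hκ₂
                linarith
        calc W * (κ₀ + κ₂ * G)
            = W*(κ₀ + κ₂*Real.log A₀) + W*(κ₂*(-Real.log t)) + W*(κ₂*Real.log (D+1)) := by
              rw [hGeq]; ring
        _ ≤ C₀'*(κ₀ + κ₂*Real.log A₀) + κ₂*(C₀'*c₅) + κ₂*(2*Cinf'*cA+1) := by linarith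
        _ ≤ κ := by rw [hκdef, hS1def]; linarith
    · -- large scale
      refine ⟨min (2*Cinf'/Linf) 1, le_min (by positivity) zero_le_one, ?_, ?_⟩
      · intro u hu v hv
        exact le_min (hosc3 u hu v hv) (hosc1 u hu v hv)
      · set W : ℝ := min (2*Cinf'/Linf) 1 with hWdef
        have hW0 : 0 ≤ W := le_min (by positivity) zero_le_one
        have hW3 : W ≤ 2*Cinf'/Linf := min_le_left _ _
        have hW1 : W ≤ 1 := min_le_right _ _
        have h8 : (0:ℝ) < 8*A₀*C := by positivity
        have h2' : 1 < 8*A₀*C*t := by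
          rw [ht₀def] at hcase
          have h1 := (div_lt_iff₀ h8).mp hcase
          have h2 : t*(8*A₀*C) = 8*A₀*C*t := by ring
          linarith
        rcases le_or_gt D (2*A₀*C*t) with hnear | hfarD
        · have hGle : G ≤ g₁ := by
            rw [hGdef]
            apply max_le hg₁
            have h1 : Real.log (A₀*(D+1)) - Real.log t = Real.log (A₀*(D+1)/t) :=
              (Real.log_div (by positivity) ht.ne').symm
            rw [h1, hg₁def]
            apply Real.log_le_log (by positivity)
            rw [div_le_iff₀ ht]
            have hm1 := mul_le_mul_of_nonneg_left hnear hA₀0.le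
            have hm2 := mul_lt_mul_of_pos_left h2' hA₀0
            have hm3 : A₀*(2*A₀*C*t) + A₀*(8*A₀*C*t) = 10*A₀^2*C*t := by ring
            linarith
          calc W*(κ₀ + κ₂*G) ≤ 1*(κ₀ + κ₂*g₁) := by
                apply mul_le_mul hW1 _ hΛ0 zero_le_one
                have h1 := mul_le_mul_of_nonneg_left hGle hκ₂
                linarith
          _ = S2 := by rw [hS2def]; ring
          _ ≤ κ := by rw [hκdef]; linarith
        · have hGle : G ≤ Real.log A₀ + Real.log (D+1) + |Real.log t₀| := by
            rw [hGdef]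
            have hlogD0 : 0 ≤ Real.log (D+1) := Real.log_nonneg (by linarith)
            apply max_le (by positivity)
            have h1 : Real.log (A₀*(D+1)) = Real.log A₀ + Real.log (D+1) :=
              Real.log_mul hA₀0.ne' (by linarith : D+1 ≠ 0)
            have h2 : -Real.log t ≤ |Real.log t₀| := by
              have h3 := Real.log_le_log ht₀ hcase.le
              have h4 := neg_le_abs (Real.log t₀)
              linarith
            linarith
          have hT3b := hT3far W hW0 hW3 (by linarith)
          have hlogD0 : 0 ≤ Real.log (D+1) := Real.log_nonneg (by linarith)
          calc W*(κ₀ + κ₂*G)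
              ≤ W*(κ₀ + κ₂*(Real.log A₀ + Real.log (D+1) + |Real.log t₀|)) := by
                apply mul_le_mul_of_nonneg_left _ hW0
                have h1 := mul_le_mul_of_nonneg_left hGle hκ₂
                linarith
          _ = W*(κ₀ + κ₂*Real.log A₀ + κ₂*|Real.log t₀|) + κ₂*(W*Real.log (D+1)) := by ring
          _ ≤ 1*(κ₀ + κ₂*Real.log A₀ + κ₂*|Real.log t₀|) + κ₂*(2*Cinf'*cA) := by
                have hp1 : W*(κ₀ + κ₂*Real.log A₀ + κ₂*|Real.log t₀|) ≤
                    1*(κ₀ + κ₂*Real.log A₀ + κ₂*|Real.log t₀|) :=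
                  mul_le_mul_of_nonneg_right hW1 (by positivity)
                have hp2 : κ₂*(W*Real.log (D+1)) ≤ κ₂*(2*Cinf'*cA) :=
                  mul_le_mul_of_nonneg_left hT3b hκ₂
                linarith
          _ ≤ S3 := by rw [hS3def]; linarith
          _ ≤ κ := by rw [hκdef]; linarith
  -- assembly
  have hbaW : b - a ≤ W := hba W hWosc
  have hofq : ENNReal.ofReal q = μ Q := by
    rw [hqdef]; exact ENNReal.ofReal_toReal hμQtop.ne
  have key : ∀ e : ℝ, -W ≤ e → e ≤ 0 → μ Q ^ e ≤ ENNReal.ofReal (Real.exp κ) := by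
    intro e he1 he2
    rw [← hofq, ENNReal.ofReal_rpow_of_pos hq0]
    apply ENNReal.ofReal_le_ofReal
    rcases le_or_gt 1 q with h1 | h1
    · calc q ^ e ≤ q ^ (0:ℝ) := Real.rpow_le_rpow_of_exponent_le h1 he2
      _ = 1 := Real.rpow_zero q
      _ ≤ Real.exp κ := Real.one_le_exp hκ
    · calc q ^ e ≤ q ^ (-W) := Real.rpow_le_rpow_of_exponent_ge hq0 h1.le he1
      _ = Real.exp (Real.log q * (-W)) := Real.rpow_def_of_pos hq0 _
      _ ≤ Real.exp κ := by
          apply Real.exp_le_exp.mpr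
          have h2 : Real.log q * (-W) = W * (-Real.log q) := by ring
          rw [h2]
          calc W * (-Real.log q) ≤ W * (κ₀ + κ₂*G) := mul_le_mul_of_nonneg_left hlogq hW0
          _ ≤ κ := hWκ
  obtain ⟨hza, hzb⟩ := hRy (xc Q) hz0
  refine ⟨?_, ?_⟩
  · exact key (a - b) (by linarith) (by linarith)
  · intro y hy
    obtain ⟨hya, hyb⟩ := hRy y hy
    constructor
    · show μ Q ^ (rr y - b) ≤ ENNReal.ofReal (Real.exp κ)
      exact key (rr y - b) (by linarith) (by linarith)
    · show μ Q ^ (a - rr y) ≤ ENNReal.ofReal (Real.exp κ)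
      exact key (a - rr y) (by linarith) (by linarith)
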